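/- Let A = (a_{ij})_{i,j≥1} be an arbitrary infinite complex matrix, n ≥ 0 and m ≥ 1. Then the set E_A^{(m)} of common zeros in ℂ^{n+1} of all polynomials P^I_A with I ranging over the m-element subsets of {1,…,m+n} is a finite subset of ℂ^{n+1} with at most binomial(m+n, n+1) elements. -/

import Mathlib

/-- The polynomial `P^I_A` (see the paper): determinant of the `m × m` submatrix of
`A - ∑ x_s I_s` formed by the first `m` rows and the columns indexed by `I` (`0`-based). -/
noncomputable def PIA (A : ℕ → ℕ → ℂ) (n m : ℕ) (i : Fin m → Fin (m + n)) :
    MvPolynomial (Fin (n + 1)) ℂ :=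
  Matrix.det (Matrix.of fun r c : Fin m =>
    MvPolynomial.C (A (r : ℕ) ((i c : ℕ))) -
      if h : (r : ℕ) ≤ (i c : ℕ) ∧ (i c : ℕ) ≤ (r : ℕ) + n then
        MvPolynomial.X (⟨(i c : ℕ) - (r : ℕ), by omega⟩ : Fin (n + 1))
      else 0)

/-- The set `E_A^{(m)}` of common zeros in `ℂ^{n+1}` of all polynomials `P^I_A`,
with `I` ranging over the `m`-element subsets of the column indices. -/
noncomputable def EAm (A : ℕ → ℕ → ℂ) (n m : ℕ) : Set (Fin (n + 1) → ℂ) :=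
  {x | ∀ i : Fin m → Fin (m + n), StrictMono i → MvPolynomial.eval x (PIA A n m i) = 0}

open MvPolynomial Finset

noncomputable def Bmat (n m : ℕ) (i : Fin m → Fin (m + n)) :
    Matrix (Fin m) (Fin m) (MvPolynomial (Fin (n + 1)) ℂ) :=
  Matrix.of fun r c : Fin m =>
    if h : (r : ℕ) ≤ (i c : ℕ) ∧ (i c : ℕ) ≤ (r : ℕ) + n then
      MvPolynomial.X (⟨(i c : ℕ) - (r : ℕ), by omega⟩ : Fin (n + 1))
    else 0

noncomputable def Dpoly (n m : ℕ) (i : Fin m → Fin (m + n)) : MvPolynomial (Fin (n + 1)) ℂ :=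
  (Bmat n m i).det

-- rearrangement
lemma rearr {m : ℕ} (v : Fin m → ℤ) (hv : StrictMono v) (σ : Equiv.Perm (Fin m)) (hσ : σ ≠ 1) :
    ∑ r : Fin m, ((σ r : ℕ) : ℤ) * v r < ∑ r : Fin m, ((r : ℕ) : ℤ) * v r := by
  have hmono : Monovary (fun r : Fin m => ((r : ℕ) : ℤ)) v := by
    intro a b h
    have hab : a ≤ b := le_of_not_gt fun hc => absurd (hv hc) (by exact not_lt.2 h.le)
    simp only []
    exact_mod_cast hab
  refine (hmono.sum_comp_perm_mul_lt_sum_mul_iff).2 ?_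
  intro hc
  -- hc : Monovary ((fun r => ((r:ℕ):ℤ)) ∘ σ) v ; derive σ strictmono, hence σ = 1
  have hsm : StrictMono σ := by
    intro a b hab
    have h1 : ((σ a : ℕ) : ℤ) ≤ ((σ b : ℕ) : ℤ) := hc (hv hab)
    have h2 : (σ a : ℕ) ≤ (σ b : ℕ) := by exact_mod_cast h1
    have hne : σ a ≠ σ b := fun h => absurd (σ.injective h) (ne_of_lt hab)
    exact lt_of_le_of_ne (by exact_mod_cast h2) hne
  apply hσ
  have : (σ : Fin m → Fin m) = id := by
    have hr : Set.range ⇑σ = Set.range (@id (Fin m)) := by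
      rw [Set.range_eq_univ.2 σ.surjective, Set.range_id]
    haveI : WellFoundedLT (Fin m) := inferInstance
    exact (@StrictMono.range_inj (Fin m) (Fin m) _ _ this _ _ hsm strictMono_id).1 hr
  ext x
  exact congrArg Fin.val (congrFun this x)

def Psi {n m : ℕ} (e : Fin m → Fin (n + 1)) : ℕ := ∑ c, (e c : ℕ) ^ 2

lemma Psi_le {n m : ℕ} (e : Fin m → Fin (n + 1)) : Psi e ≤ m * n ^ 2 := by
  have : ∀ c : Fin m, (e c : ℕ) ^ 2 ≤ n ^ 2 := fun c =>
    Nat.pow_le_pow_left (Nat.lt_succ_iff.1 (e c).isLt) 2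
  calc Psi e ≤ ∑ _c : Fin m, n ^ 2 := Finset.sum_le_sum fun c _ => this c
  _ = m * n ^ 2 := by simp [Finset.sum_const, Finset.card_univ]

noncomputable def SpanD (n m : ℕ) : Submodule ℂ (MvPolynomial (Fin (n + 1)) ℂ) :=
  Submodule.span ℂ (Set.range fun i : { i : Fin m → Fin (m + n) // StrictMono i } => Dpoly n m i.1)

lemma mon_mem_spanD {n m : ℕ} (e : Fin m → Fin (n + 1)) :
    (∏ c, X (e c) : MvPolynomial (Fin (n + 1)) ℂ) ∈ SpanD n m := by
  suffices H : ∀ K : ℕ, ∀ e : Fin m → Fin (n + 1), m * n ^ 2 - Psi e = K →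
      (∏ c, X (e c) : MvPolynomial (Fin (n + 1)) ℂ) ∈ SpanD n m from H _ e rfl
  intro K
  induction K using Nat.strong_induction_on with
  | _ K IH =>
  intro e hK
  -- sort e
  set τ := Tuple.sort e with hτ
  set e' : Fin m → Fin (n + 1) := e ∘ τ with he'
  have hmono : Monotone e' := Tuple.monotone_sort e
  have hprod : (∏ c, X (e c) : MvPolynomial (Fin (n + 1)) ℂ) = ∏ c, X (e' c) :=
    (Equiv.prod_comp τ fun c => (X (e c) : MvPolynomial (Fin (n + 1)) ℂ)).symm
  have hPsi : Psi e' = Psi e := Equiv.sum_comp τ (fun c => (e c : ℕ) ^ 2)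
  rw [hprod]
  -- the strictly monotone column choice
  have hlt : ∀ c : Fin m, (e' c : ℕ) + (c : ℕ) < m + n := by
    intro c; have := (e' c).isLt; have := c.isLt; omega
  set i : Fin m → Fin (m + n) := fun c => ⟨(e' c : ℕ) + c, hlt c⟩ with hi_def
  have hi : StrictMono i := by
    intro a b hab
    have h1 : (e' a : ℕ) ≤ e' b := hmono hab.le
    have h2 : (a : ℕ) < b := hab
    show ((e' a : ℕ) + a) < (e' b : ℕ) + b
    omega
  -- determinant expansion
  have hdet : Dpoly n m i =
      ∑ σ : Equiv.Perm (Fin m), Equiv.Perm.sign σ • ∏ r, Bmat n m i (σ r) r :=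
    Matrix.det_apply _
  have hdiag : (Equiv.Perm.sign (1 : Equiv.Perm (Fin m))) • (∏ r, Bmat n m i ((1 : Equiv.Perm (Fin m)) r) r)
      = ∏ c, (X (e' c) : MvPolynomial (Fin (n + 1)) ℂ) := by
    rw [Equiv.Perm.sign_one, one_smul]
    apply Finset.prod_congr rfl
    intro c _
    have hcond : ((c : Fin m) : ℕ) ≤ (i c : ℕ) ∧ (i c : ℕ) ≤ (c : ℕ) + n := by
      show (c : ℕ) ≤ (e' c : ℕ) + c ∧ (e' c : ℕ) + c ≤ (c : ℕ) + n
      have := (e' c).isLt; omega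
    show Bmat n m i c c = X (e' c)
    rw [Bmat, Matrix.of_apply, dif_pos hcond]
    congr 1
    apply Fin.ext
    show (i c : ℕ) - (c : ℕ) = e' c
    show (e' c : ℕ) + c - c = e' c
    omega
  have hsplit : Dpoly n m i = (∏ c, (X (e' c) : MvPolynomial (Fin (n + 1)) ℂ)) +
      ∑ σ ∈ Finset.univ.erase (1 : Equiv.Perm (Fin m)),
        Equiv.Perm.sign σ • ∏ r, Bmat n m i (σ r) r := by
    rw [hdet, ← hdiag]
    exact (Finset.add_sum_erase Finset.univ
      (fun σ : Equiv.Perm (Fin m) => Equiv.Perm.sign σ • ∏ r, Bmat n m i (σ r) r)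
      (Finset.mem_univ 1)).symm
  have hmem : ∀ σ ∈ Finset.univ.erase (1 : Equiv.Perm (Fin m)),
      (Equiv.Perm.sign σ • ∏ r, Bmat n m i (σ r) r) ∈ SpanD n m := by
    intro σ hσ
    have hσ1 : σ ≠ 1 := Finset.ne_of_mem_erase hσ
    rw [Units.smul_def]
    apply zsmul_mem
    by_cases hband : ∀ r : Fin m, ((σ r : ℕ) ≤ (i r : ℕ) ∧ (i r : ℕ) ≤ (σ r : ℕ) + n)
    · -- all entries in band
      have hgdef : ∀ r : Fin m, (i r : ℕ) - (σ r : ℕ) < n + 1 := by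
        intro r; have := (hband r); omega
      set g : Fin m → Fin (n + 1) := fun r => ⟨(i r : ℕ) - (σ r : ℕ), hgdef r⟩ with hg
      have hprodg : (∏ r, Bmat n m i (σ r) r) = ∏ r, (X (g r) : MvPolynomial (Fin (n + 1)) ℂ) := by
        apply Finset.prod_congr rfl
        intro r _
        rw [Bmat, Matrix.of_apply, dif_pos (hband r)]
      rw [hprodg]
      -- strict inequality of measures
      have hieq : ∀ r : Fin m, ((i r : ℕ) : ℤ) = ((e' r : ℕ) : ℤ) + ((r : ℕ) : ℤ) := by
        intro r; show (((e' r : ℕ) + (r : ℕ) : ℕ) : ℤ) = _; push_cast; ring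
      have hgeq : ∀ r : Fin m, ((g r : ℕ) : ℤ) = ((i r : ℕ) : ℤ) - ((σ r : ℕ) : ℤ) := by
        intro r
        show (((i r : ℕ) - (σ r : ℕ) : ℕ) : ℤ) = _
        have := (hband r).1
        omega
      have hperm2 : ∑ r : Fin m, ((σ r : ℕ) : ℤ) ^ 2 = ∑ r : Fin m, ((r : ℕ) : ℤ) ^ 2 :=
        Equiv.sum_comp σ (fun r : Fin m => ((r : ℕ) : ℤ) ^ 2)
      have hstrict : StrictMono (fun r : Fin m => ((i r : ℕ) : ℤ)) := by
        intro a b hab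
        show ((i a : ℕ) : ℤ) < ((i b : ℕ) : ℤ)
        exact_mod_cast hi hab
      have hre := rearr (fun r => ((i r : ℕ) : ℤ)) hstrict σ hσ1
      have hPsilt : Psi e' < Psi g := by
        have hcast : (Psi e' : ℤ) < (Psi g : ℤ) := by
          have hA : (Psi g : ℤ) = ∑ r : Fin m, (((i r : ℕ) : ℤ) - ((σ r : ℕ) : ℤ)) ^ 2 := by
            rw [Psi]; push_cast
            apply Finset.sum_congr rfl
            intro r _
            rw [hgeq r, hieq r]
          have hB : (Psi e' : ℤ) = ∑ r : Fin m, (((i r : ℕ) : ℤ) - ((r : ℕ) : ℤ)) ^ 2 := by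
            rw [Psi]; push_cast
            apply Finset.sum_congr rfl
            intro r _
            rw [hieq r]; ring
          rw [hA, hB]
          have expandA : ∑ r : Fin m, (((i r : ℕ) : ℤ) - ((σ r : ℕ) : ℤ)) ^ 2
              = ∑ r : Fin m, ((i r : ℕ) : ℤ) ^ 2 + ∑ r : Fin m, ((σ r : ℕ) : ℤ) ^ 2
                - 2 * ∑ r : Fin m, ((σ r : ℕ) : ℤ) * ((i r : ℕ) : ℤ) := by
            rw [Finset.mul_sum, ← Finset.sum_add_distrib, ← Finset.sum_sub_distrib]
            apply Finset.sum_congr rfl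
            intros; ring
          have expandB : ∑ r : Fin m, (((i r : ℕ) : ℤ) - ((r : ℕ) : ℤ)) ^ 2
              = ∑ r : Fin m, ((i r : ℕ) : ℤ) ^ 2 + ∑ r : Fin m, ((r : ℕ) : ℤ) ^ 2
                - 2 * ∑ r : Fin m, ((r : ℕ) : ℤ) * ((i r : ℕ) : ℤ) := by
            rw [Finset.mul_sum, ← Finset.sum_add_distrib, ← Finset.sum_sub_distrib]
            apply Finset.sum_congr rfl
            intros; ring
          rw [expandA, expandB, hperm2]
          have hre' : ∑ r : Fin m, ((σ r : ℕ) : ℤ) * ((i r : ℕ) : ℤ)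
              < ∑ r : Fin m, ((r : ℕ) : ℤ) * ((i r : ℕ) : ℤ) := hre
          linarith
        exact_mod_cast hcast
      have hPsig : Psi g ≤ m * n ^ 2 := Psi_le g
      have hKg : m * n ^ 2 - Psi g < K := by
        have hPe : Psi e' ≤ m * n ^ 2 := Psi_le e'
        omega
      exact IH _ hKg g rfl
    · -- some entry out of band: product is zero
      push_neg at hband
      obtain ⟨r, hr⟩ := hband
      have : Bmat n m i (σ r) r = 0 := by
        rw [Bmat, Matrix.of_apply, dif_neg]
        intro hc; exact absurd hc.2 (not_le.2 (hr hc.1))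
      have hzero : (∏ r' : Fin m, Bmat n m i (σ r') r') = 0 :=
        Finset.prod_eq_zero (Finset.mem_univ r) this
      rw [hzero]
      exact zero_mem _
  have : (∏ c, (X (e' c) : MvPolynomial (Fin (n + 1)) ℂ)) = Dpoly n m i -
      ∑ σ ∈ Finset.univ.erase (1 : Equiv.Perm (Fin m)),
        Equiv.Perm.sign σ • ∏ r, Bmat n m i (σ r) r := by
    rw [hsplit]; ring
  rw [this]
  exact Submodule.sub_mem _ (Submodule.subset_span ⟨⟨i, hi⟩, rfl⟩) (Submodule.sum_mem _ hmem)

lemma prod_sub_deg {N : ℕ} {ι : Type*} [DecidableEq ι] (s : Finset ι)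
    (f g : ι → MvPolynomial (Fin N) ℂ)
    (hf : ∀ r, (f r).totalDegree ≤ 1) (hg : ∀ r, (g r).totalDegree ≤ 1)
    (hfg : ∀ r, (f r - g r).totalDegree = 0) :
    (∏ r ∈ s, f r - ∏ r ∈ s, g r).totalDegree < s.card ∨
      (∏ r ∈ s, f r - ∏ r ∈ s, g r) = 0 := by
  classical
  induction s using Finset.induction_on with
  | empty => right; simp
  | insert _ _ ha =>
    rename_i a s IH
    have hkey : ∏ r ∈ insert a s, f r - ∏ r ∈ insert a s, g r =
        (f a - g a) * ∏ r ∈ s, f r + g a * (∏ r ∈ s, f r - ∏ r ∈ s, g r) := by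
      rw [Finset.prod_insert ha, Finset.prod_insert ha]; ring
    have hdeg1 : ((f a - g a) * ∏ r ∈ s, f r).totalDegree ≤ s.card := by
      calc ((f a - g a) * ∏ r ∈ s, f r).totalDegree
          ≤ (f a - g a).totalDegree + (∏ r ∈ s, f r).totalDegree :=
            MvPolynomial.totalDegree_mul _ _
      _ ≤ 0 + ∑ r ∈ s, (f r).totalDegree := by
            gcongr
            · exact le_of_eq (hfg a)
            · exact MvPolynomial.totalDegree_finset_prod s f
      _ ≤ 0 + ∑ _r ∈ s, 1 := by gcongr with r hr; exact hf r
      _ = s.card := by simp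
    left
    rw [hkey, Finset.card_insert_of_notMem ha]
    rcases IH with hlt | hzero
    · have hdeg2 : (g a * (∏ r ∈ s, f r - ∏ r ∈ s, g r)).totalDegree ≤ s.card := by
        calc (g a * (∏ r ∈ s, f r - ∏ r ∈ s, g r)).totalDegree
            ≤ (g a).totalDegree + (∏ r ∈ s, f r - ∏ r ∈ s, g r).totalDegree :=
              MvPolynomial.totalDegree_mul _ _
        _ ≤ 1 + (∏ r ∈ s, f r - ∏ r ∈ s, g r).totalDegree := by gcongr; exact hg a
        _ ≤ s.card := by omega
      calc ((f a - g a) * ∏ r ∈ s, f r + g a * (∏ r ∈ s, f r - ∏ r ∈ s, g r)).totalDegree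
          ≤ max ((f a - g a) * ∏ r ∈ s, f r).totalDegree
              (g a * (∏ r ∈ s, f r - ∏ r ∈ s, g r)).totalDegree :=
            MvPolynomial.totalDegree_add _ _
      _ ≤ s.card := by omega
      _ < s.card + 1 := by omega
    · rw [hzero, mul_zero, add_zero]
      omega

lemma PIA_eq_det (A : ℕ → ℕ → ℂ) {n m : ℕ} (i : Fin m → Fin (m + n)) :
    PIA A n m i = ((Matrix.of fun r c : Fin m => (C (A (r : ℕ) ((i c : ℕ))) : MvPolynomial (Fin (n + 1)) ℂ)) - Bmat n m i).det := rfl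

lemma Q_deg (A : ℕ → ℕ → ℂ) {n m : ℕ} (hm : 1 ≤ m) (i : Fin m → Fin (m + n)) :
    (Dpoly n m i - (-1 : MvPolynomial (Fin (n + 1)) ℂ) ^ m * PIA A n m i).totalDegree ≤ m - 1 := by
  classical
  set Ca : Matrix (Fin m) (Fin m) (MvPolynomial (Fin (n + 1)) ℂ) :=
    Matrix.of fun r c : Fin m => C (A (r : ℕ) ((i c : ℕ))) with hCa
  have h1 : (-1 : MvPolynomial (Fin (n + 1)) ℂ) ^ m * PIA A n m i = (Bmat n m i - Ca).det := by
    rw [PIA_eq_det A i, ← hCa, show Bmat n m i - Ca = -(Ca - Bmat n m i) from (neg_sub _ _).symm,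
      Matrix.det_neg, Fintype.card_fin]
  rw [h1, Dpoly, Matrix.det_apply, Matrix.det_apply, ← Finset.sum_sub_distrib]
  have hterm : ∀ σ : Equiv.Perm (Fin m),
      (Equiv.Perm.sign σ • ∏ r, Bmat n m i (σ r) r -
        Equiv.Perm.sign σ • ∏ r, (Bmat n m i - Ca) (σ r) r).totalDegree ≤ m - 1 := by
    intro σ
    rw [← smul_sub]
    refine le_trans (MvPolynomial.totalDegree_smul_le _ _) ?_
    have hB : ∀ r : Fin m, ((Bmat n m i) (σ r) r).totalDegree ≤ 1 := by
      intro r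
      rw [Bmat, Matrix.of_apply]
      split
      · exact le_of_eq (MvPolynomial.totalDegree_X _)
      · simp
    have hBC : ∀ r : Fin m, ((Bmat n m i - Ca) (σ r) r).totalDegree ≤ 1 := by
      intro r
      have : (Bmat n m i - Ca) (σ r) r = Bmat n m i (σ r) r - Ca (σ r) r := rfl
      rw [this]
      refine le_trans (MvPolynomial.totalDegree_sub _ _) ?_
      simp only [hCa, Matrix.of_apply, MvPolynomial.totalDegree_C]
      exact max_le (hB r) (by omega)
    have hdiff : ∀ r : Fin m,
        ((Bmat n m i) (σ r) r - (Bmat n m i - Ca) (σ r) r).totalDegree = 0 := by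
      intro r
      have : (Bmat n m i) (σ r) r - (Bmat n m i - Ca) (σ r) r = Ca (σ r) r := by
        have h2 : (Bmat n m i - Ca) (σ r) r = Bmat n m i (σ r) r - Ca (σ r) r := rfl
        rw [h2]; ring
      rw [this, hCa, Matrix.of_apply]
      exact MvPolynomial.totalDegree_C _
    rcases prod_sub_deg Finset.univ (fun r => Bmat n m i (σ r) r)
        (fun r => (Bmat n m i - Ca) (σ r) r) hB hBC hdiff with hlt | hzero
    · rw [Finset.card_univ, Fintype.card_fin] at hlt; omega
    · rw [hzero]; simp
  refine le_trans (MvPolynomial.totalDegree_finset_sum _ _) ?_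
  exact Finset.sup_le fun σ _ => hterm σ

lemma eval_D (A : ℕ → ℕ → ℂ) {n m : ℕ} (i : Fin m → Fin (m + n)) (hi : StrictMono i)
    {p : Fin (n + 1) → ℂ} (hp : p ∈ EAm A n m) :
    eval p (Dpoly n m i) =
      eval p (Dpoly n m i - (-1 : MvPolynomial (Fin (n + 1)) ℂ) ^ m * PIA A n m i) := by
  have h := hp i hi
  rw [map_sub, map_mul, h, mul_zero, sub_zero]

lemma split_le {n : ℕ} (μ : Fin (n + 1) →₀ ℕ) (k : ℕ) (hk : k ≤ ∑ s, μ s) :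
    ∃ β : Fin (n + 1) →₀ ℕ, β ≤ μ ∧ ∑ s, β s = k := by
  induction k with
  | zero => exact ⟨0, zero_le, by simp⟩
  | succ k IH =>
    obtain ⟨β, hβ, hsum⟩ := IH (by omega)
    have hex : ∃ s, β s < μ s := by
      by_contra hc
      push_neg at hc
      have : ∑ s, μ s ≤ ∑ s, β s := Finset.sum_le_sum fun s _ => hc s
      omega
    obtain ⟨s, hs⟩ := hex
    refine ⟨β + Finsupp.single s 1, ?_, ?_⟩
    · rw [Finsupp.le_def]
      intro a
      rw [Finsupp.add_apply, Finsupp.single_apply]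
      rcases eq_or_ne s a with rfl | hne
      · simpa using hs
      · simp only [if_neg hne, add_zero]
        exact Finsupp.le_def.1 hβ a
    · simp only [Finsupp.add_apply, Finset.sum_add_distrib, hsum]
      rw [Finset.sum_eq_single s (fun b _ hb => by rw [Finsupp.single_apply, if_neg (Ne.symm hb)])
        (fun h => absurd (Finset.mem_univ s) h)]
      simp

lemma sub_single {n : ℕ} (β γ : Fin (n + 1) →₀ ℕ) (s : Fin (n + 1)) (hs : 0 < β s)
    (hγ : γ = β - Finsupp.single s 1) :
    (∑ a, γ a) = (∑ a, β a) - 1 ∧ Finsupp.single s 1 + γ = β := by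
  have happ : ∀ a, γ a = β a - (if s = a then 1 else 0) := by
    intro a
    rw [hγ, Finsupp.tsub_apply, Finsupp.single_apply]
  constructor
  · have hle : ∀ a ∈ Finset.univ, (if s = a then 1 else 0) ≤ β a := by
      intro a _
      rcases eq_or_ne s a with rfl | hne
      · rw [if_pos rfl]; omega
      · rw [if_neg hne]; omega
    have hsingle : (∑ a : Fin (n + 1), (if s = a then (1 : ℕ) else 0)) = 1 := by simp
    calc (∑ a, γ a)
        = ∑ a, (β a - (if s = a then 1 else 0)) := Finset.sum_congr rfl fun a _ => happ a
      _ = (∑ a, β a) - ∑ a : Fin (n + 1), (if s = a then (1 : ℕ) else 0) :=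
          Finset.sum_tsub_distrib Finset.univ hle
      _ = (∑ a, β a) - 1 := by rw [hsingle]
  · ext a
    rw [Finsupp.add_apply, happ a, Finsupp.single_apply]
    rcases eq_or_ne s a with rfl | hne
    · rw [if_pos rfl]; omega
    · rw [if_neg hne]; omega

lemma mon_prod {n : ℕ} : ∀ (m : ℕ) (β : Fin (n + 1) →₀ ℕ), (∑ s, β s) = m →
    ∃ e : Fin m → Fin (n + 1), (monomial β (1 : ℂ) : MvPolynomial (Fin (n + 1)) ℂ) = ∏ c, X (e c) := by
  intro m
  induction m with
  | zero =>
    intro β hβ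
    have : β = 0 := by
      ext a
      have h1 : β a ≤ ∑ s, β s := Finset.single_le_sum (fun s _ => Nat.zero_le _) (Finset.mem_univ a)
      simp only [hβ] at h1
      simpa using h1
    refine ⟨Fin.elim0, ?_⟩
    rw [this]
    simp [MvPolynomial.monomial_zero']
  | succ m IH =>
    intro β hβ
    have hex : ∃ s, 0 < β s := by
      by_contra hc
      push_neg at hc
      have : ∑ s, β s = 0 := Finset.sum_eq_zero fun s _ => by have := hc s; omega
      omega
    obtain ⟨s, hs⟩ := hex
    obtain ⟨hsum', hrecover⟩ := sub_single β (β - Finsupp.single s 1) s hs rfl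
    obtain ⟨e', he'⟩ := IH (β - Finsupp.single s 1) (by omega)
    refine ⟨Fin.cons s e', ?_⟩
    rw [← hrecover, MvPolynomial.monomial_single_add, pow_one, he', Fin.prod_univ_succ]
    simp [Fin.cons_zero, Fin.cons_succ]

noncomputable def Ypoly (n : ℕ) : Fin (n + 2) → MvPolynomial (Fin (n + 1)) ℂ :=
  Fin.cases 1 X

lemma mon_prod_pad {n : ℕ} : ∀ (M : ℕ) (β : Fin (n + 1) →₀ ℕ), (∑ s, β s) ≤ M →
    ∃ e : Fin M → Fin (n + 2),
      (monomial β (1 : ℂ) : MvPolynomial (Fin (n + 1)) ℂ) = ∏ c, Ypoly n (e c) := by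
  intro M
  induction M with
  | zero =>
    intro β hβ
    have : β = 0 := by
      ext a
      have h1 : β a ≤ ∑ s, β s := Finset.single_le_sum (fun s _ => Nat.zero_le _) (Finset.mem_univ a)
      simp only [Finsupp.coe_zero, Pi.zero_apply]
      omega
    refine ⟨Fin.elim0, ?_⟩
    rw [this]
    simp [MvPolynomial.monomial_zero']
  | succ M IH =>
    intro β hβ
    by_cases h0 : ∑ s, β s = 0
    · obtain ⟨e', he'⟩ := IH β (by omega)
      set e2 : Fin (M + 1) → Fin (n + 2) := Fin.cons 0 e' with he2
      refine ⟨e2, ?_⟩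
      rw [he', Fin.prod_univ_succ]
      have h1 : Ypoly n (e2 0) = 1 := by rw [he2, Fin.cons_zero]; rfl
      rw [h1, one_mul]
      exact Finset.prod_congr rfl fun c _ => by rw [he2, Fin.cons_succ]
    · have hex : ∃ s, 0 < β s := by
        by_contra hc
        push_neg at hc
        exact h0 (Finset.sum_eq_zero fun s _ => by have := hc s; omega)
      obtain ⟨s, hs⟩ := hex
      obtain ⟨hsum', hrecover⟩ := sub_single β (β - Finsupp.single s 1) s hs rfl
      obtain ⟨e', he'⟩ := IH (β - Finsupp.single s 1) (by omega)
      set e2 : Fin (M + 1) → Fin (n + 2) := Fin.cons s.succ e' with he2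
      refine ⟨e2, ?_⟩
      rw [← hrecover, MvPolynomial.monomial_single_add, pow_one, he', Fin.prod_univ_succ]
      have h1 : Ypoly n (e2 0) = X s := by rw [he2, Fin.cons_zero]; rfl
      rw [h1]
      exact congrArg _ (Finset.prod_congr rfl fun c _ => by rw [he2, Fin.cons_succ])

lemma finsupp_deg_eq {n : ℕ} (μ : Fin (n + 1) →₀ ℕ) :
    (μ.sum fun _ => (id : ℕ → ℕ)) = ∑ s, μ s :=
  Finsupp.sum_fintype _ _ fun _ => rfl

lemma reduce (A : ℕ → ℕ → ℂ) {n m : ℕ} (hm : 1 ≤ m) :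
    ∀ (d : ℕ) (f : MvPolynomial (Fin (n + 1)) ℂ), f.totalDegree ≤ d →
      ∃ g : MvPolynomial (Fin (n + 1)) ℂ, g.totalDegree ≤ m - 1 ∧
        ∀ p ∈ EAm A n m, eval p f = eval p g := by
  intro d
  induction d with
  | zero =>
    intro f hf
    exact ⟨f, by omega, fun p _ => rfl⟩
  | succ d IH =>
    intro f hf
    by_cases hdm : d + 1 ≤ m - 1
    · exact ⟨f, le_trans hf hdm, fun p _ => rfl⟩
    have hstep : ∀ μ ∈ f.support, ∃ h : MvPolynomial (Fin (n + 1)) ℂ,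
        h.totalDegree ≤ d ∧ ∀ p ∈ EAm A n m,
          eval p (monomial μ (coeff μ f)) = eval p h := by
      intro μ hμ
      have hdμ0 := le_trans (MvPolynomial.le_totalDegree hμ) hf
      have hdμ : ∑ s, μ s ≤ d + 1 := by rw [← finsupp_deg_eq]; exact hdμ0
      by_cases hcase : ∑ s, μ s ≤ d
      · refine ⟨monomial μ (coeff μ f), ?_, fun p _ => rfl⟩
        refine le_trans (MvPolynomial.totalDegree_monomial_le _ _) ?_
        rw [finsupp_deg_eq]; exact hcase
      · -- ∑ μ = d + 1 ≥ m
        have hd1 : ∑ s, μ s = d + 1 := by omega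
        have hmd : m ≤ d + 1 := by omega
        obtain ⟨β, hβle, hβsum⟩ := split_le μ m (by omega)
        set α : Fin (n + 1) →₀ ℕ := μ - β with hα
        have hαβ : α + β = μ := tsub_add_cancel_of_le hβle
        have hαsum : ∑ s, α s = d + 1 - m := by
          have h3 : ∀ s, α s = μ s - β s := fun s => by rw [hα, Finsupp.tsub_apply]
          have hle : ∀ s ∈ Finset.univ, β s ≤ μ s := fun s _ => Finsupp.le_def.1 hβle s
          calc ∑ s, α s = ∑ s, (μ s - β s) := Finset.sum_congr rfl fun s _ => h3 s
            _ = (∑ s, μ s) - ∑ s, β s := Finset.sum_tsub_distrib Finset.univ hle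
            _ = d + 1 - m := by rw [hd1, hβsum]
        obtain ⟨e, he⟩ := mon_prod m β hβsum
        have hspan : (monomial β (1 : ℂ) : MvPolynomial (Fin (n + 1)) ℂ) ∈ SpanD n m := by
          rw [he]; exact mon_mem_spanD e
        rw [SpanD, Submodule.mem_span_range_iff_exists_fun] at hspan
        obtain ⟨c, hc⟩ := hspan
        set SQ : MvPolynomial (Fin (n + 1)) ℂ :=
          ∑ j : { i : Fin m → Fin (m + n) // StrictMono i }, c j •
            (Dpoly n m j.1 - (-1 : MvPolynomial (Fin (n + 1)) ℂ) ^ m * PIA A n m j.1) with hSQ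
        have hSQdeg : SQ.totalDegree ≤ m - 1 := by
          rw [hSQ]
          refine le_trans (MvPolynomial.totalDegree_finset_sum _ _) ?_
          refine Finset.sup_le fun j _ => ?_
          exact le_trans (MvPolynomial.totalDegree_smul_le _ _) (Q_deg A hm j.1)
        have hSQeval : ∀ p ∈ EAm A n m, eval p (monomial β (1 : ℂ)) = eval p SQ := by
          intro p hp
          rw [← hc, hSQ, map_sum, map_sum]
          refine Finset.sum_congr rfl fun j _ => ?_
          rw [smul_eq_C_mul, smul_eq_C_mul, map_mul, map_mul]
          congr 1
          exact eval_D A j.1 j.2 hp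
        refine ⟨monomial α (coeff μ f) * SQ, ?_, ?_⟩
        · have h2 : (monomial α (coeff μ f)).totalDegree ≤ d + 1 - m := by
            refine le_trans (MvPolynomial.totalDegree_monomial_le _ _) ?_
            rw [finsupp_deg_eq]; exact le_of_eq hαsum
          calc (monomial α (coeff μ f) * SQ).totalDegree
              ≤ (monomial α (coeff μ f)).totalDegree + SQ.totalDegree :=
                MvPolynomial.totalDegree_mul _ _
            _ ≤ (d + 1 - m) + (m - 1) := add_le_add h2 hSQdeg
            _ ≤ d := by omega
        · intro p hp
          have hmon : (monomial μ (coeff μ f) : MvPolynomial (Fin (n + 1)) ℂ) =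
              monomial α (coeff μ f) * monomial β 1 := by
            rw [MvPolynomial.monomial_mul, mul_one, hαβ]
          rw [hmon, map_mul, map_mul, hSQeval p hp]
    choose hfun hdeg hagree using hstep
    set F : MvPolynomial (Fin (n + 1)) ℂ := ∑ μ ∈ f.support.attach, hfun μ.1 μ.2 with hF
    have hFdeg : F.totalDegree ≤ d := by
      rw [hF]
      refine le_trans (MvPolynomial.totalDegree_finset_sum _ _) ?_
      exact Finset.sup_le fun μ _ => hdeg μ.1 μ.2
    obtain ⟨g, hg1, hg2⟩ := IH F hFdeg
    refine ⟨g, hg1, fun p hp => ?_⟩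
    rw [← hg2 p hp, hF]
    conv_lhs => rw [MvPolynomial.as_sum f]
    rw [map_sum, map_sum]
    rw [← Finset.sum_attach f.support (fun μ => eval p (monomial μ (coeff μ f)))]
    exact Finset.sum_congr rfl fun μ _ => hagree μ.1 μ.2 p hp

lemma key_card (A : ℕ → ℕ → ℂ) {n m : ℕ} (hm : 1 ≤ m) (T : Finset (Fin (n + 1) → ℂ))
    (hT : ↑T ⊆ EAm A n m) : T.card ≤ (m + n).choose (n + 1) := by
  classical
  -- the generating monomials of degree ≤ m - 1
  set Sgen : Finset (MvPolynomial (Fin (n + 1)) ℂ) :=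
    Finset.image (fun e : Fin (m - 1) → Fin (n + 2) => ∏ c, Ypoly n (e c))
      (Finset.univ.filter (fun e => Monotone e)) with hSgen
  set W : Submodule ℂ (MvPolynomial (Fin (n + 1)) ℂ) := Submodule.span ℂ (Sgen : Set _) with hW
  -- counting Sgen
  have hcard : Sgen.card ≤ (m + n).choose (n + 1) := by
    refine le_trans (Finset.card_image_le) ?_
    have hinj : ∀ e ∈ Finset.univ.filter (fun e : Fin (m - 1) → Fin (n + 2) => Monotone e),
        ∀ e' ∈ Finset.univ.filter (fun e : Fin (m - 1) → Fin (n + 2) => Monotone e),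
        (Finset.image (fun c : Fin (m - 1) =>
          (⟨(e c : ℕ) + c, by have := (e c).isLt; have := c.isLt; omega⟩ : Fin (m + n))) Finset.univ) =
        (Finset.image (fun c : Fin (m - 1) =>
          (⟨(e' c : ℕ) + c, by have := (e' c).isLt; have := c.isLt; omega⟩ : Fin (m + n))) Finset.univ) →
        e = e' := by
      intro e he e' he' heq
      have hmono : Monotone e := (Finset.mem_filter.1 he).2
      have hmono' : Monotone e' := (Finset.mem_filter.1 he').2
      set f1 : Fin (m - 1) → Fin (m + n) := fun c =>
        ⟨(e c : ℕ) + c, by have := (e c).isLt; have := c.isLt; omega⟩ with hf1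
      set f2 : Fin (m - 1) → Fin (m + n) := fun c =>
        ⟨(e' c : ℕ) + c, by have := (e' c).isLt; have := c.isLt; omega⟩ with hf2
      have hsm1 : StrictMono f1 := by
        intro a b hab
        have h1 : (e a : ℕ) ≤ e b := hmono hab.le
        have h2 : (a : ℕ) < b := hab
        show ((e a : ℕ) + a) < (e b : ℕ) + b
        omega
      have hsm2 : StrictMono f2 := by
        intro a b hab
        have h1 : (e' a : ℕ) ≤ e' b := hmono' hab.le
        have h2 : (a : ℕ) < b := hab
        show ((e' a : ℕ) + a) < (e' b : ℕ) + b
        omega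
      set s : Finset (Fin (m + n)) := Finset.image f1 Finset.univ with hs
      have hscard : s.card = m - 1 := by
        rw [hs, Finset.card_image_of_injective _ hsm1.injective, Finset.card_univ,
          Fintype.card_fin]
      have hmem1 : ∀ x, f1 x ∈ s := fun x => Finset.mem_image_of_mem _ (Finset.mem_univ x)
      have hmem2 : ∀ x, f2 x ∈ s := by
        intro x
        have himg : Finset.image f1 Finset.univ = Finset.image f2 Finset.univ :=
          hs.symm.trans heq
        rw [hs, himg]
        exact Finset.mem_image_of_mem _ (Finset.mem_univ x)
      have heq1 := Finset.orderEmbOfFin_unique hscard hmem1 hsm1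
      have heq2 := Finset.orderEmbOfFin_unique hscard hmem2 hsm2
      have : f1 = f2 := heq1.trans heq2.symm
      funext c
      have hc := congrFun this c
      have hval : (e c : ℕ) + c = (e' c : ℕ) + c := congrArg Fin.val hc
      exact Fin.ext (by omega)
    have hle := Finset.card_le_card_of_injOn (f := fun e : Fin (m - 1) → Fin (n + 2) =>
        (Finset.image (fun c : Fin (m - 1) =>
          (⟨(e c : ℕ) + c, by have := (e c).isLt; have := c.isLt; omega⟩ : Fin (m + n)))
          Finset.univ))
      (t := Finset.powersetCard (m - 1) (Finset.univ : Finset (Fin (m + n))))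
      (fun e he => by
        rw [Finset.mem_coe, Finset.mem_powersetCard_univ]
        have hmono : Monotone e := (Finset.mem_filter.1 he).2
        have hsm : StrictMono (fun c : Fin (m - 1) =>
            (⟨(e c : ℕ) + c, by have := (e c).isLt; have := c.isLt; omega⟩ : Fin (m + n))) := by
          intro a b hab
          have h1 : (e a : ℕ) ≤ e b := hmono hab.le
          have h2 : (a : ℕ) < b := hab
          show ((e a : ℕ) + a) < (e b : ℕ) + b
          omega
        rw [Finset.card_image_of_injective _ hsm.injective, Finset.card_univ, Fintype.card_fin])
      (fun e he e' he' heq => hinj e he e' he' heq)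
    refine le_trans hle ?_
    rw [Finset.card_powersetCard, Finset.card_univ, Fintype.card_fin]
    have h1 : (m + n).choose (m - 1) = (m + n).choose (n + 1) := by
      have h2 := Nat.choose_symm (n := m + n) (k := m - 1) (by omega)
      have h3 : m + n - (m - 1) = n + 1 := by omega
      rw [h3] at h2
      exact h2.symm
    exact le_of_eq h1
  -- every polynomial of degree ≤ m - 1 lies in W
  have hWmem : ∀ g : MvPolynomial (Fin (n + 1)) ℂ, g.totalDegree ≤ m - 1 → g ∈ W := by
    intro g hg
    rw [MvPolynomial.as_sum g]
    refine Submodule.sum_mem _ fun μ hμ => ?_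
    have hmon1 : (monomial μ (coeff μ g) : MvPolynomial (Fin (n + 1)) ℂ) =
        (coeff μ g) • monomial μ 1 := by
      rw [MvPolynomial.smul_monomial, smul_eq_mul, mul_one]
    rw [hmon1]
    refine Submodule.smul_mem _ _ (Submodule.subset_span ?_)
    have hdμ : ∑ s, μ s ≤ m - 1 := by
      rw [← finsupp_deg_eq]
      exact le_trans (MvPolynomial.le_totalDegree hμ) hg
    obtain ⟨e, he⟩ := mon_prod_pad (m - 1) μ hdμ
    have hsort : (monomial μ (1 : ℂ) : MvPolynomial (Fin (n + 1)) ℂ) =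
        ∏ c, Ypoly n ((e ∘ Tuple.sort e) c) := by
      rw [he]
      exact (Equiv.prod_comp (Tuple.sort e) fun c => Ypoly n (e c)).symm
    rw [hSgen]
    simp only [Finset.coe_image, Set.mem_image, Finset.mem_coe, Finset.mem_filter]
    exact ⟨e ∘ Tuple.sort e, ⟨Finset.mem_univ _, Tuple.monotone_sort e⟩, hsort.symm⟩
  -- the evaluation map
  set evT : MvPolynomial (Fin (n + 1)) ℂ →ₗ[ℂ] ({x // x ∈ T} → ℂ) :=
    { toFun := fun q p => eval p.1 q
      map_add' := fun q1 q2 => by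
        funext p
        show eval p.1 (q1 + q2) = eval p.1 q1 + eval p.1 q2
        exact map_add _ _ _
      map_smul' := fun c q => by
        funext p
        show eval p.1 (c • q) = c * eval p.1 q
        rw [MvPolynomial.smul_eq_C_mul, map_mul, MvPolynomial.eval_C] } with hevT
  have hsingle : ∀ p0 : {x // x ∈ T},
      (fun j : {x // x ∈ T} => if p0 = j then (1 : ℂ) else 0) ∈ Submodule.map evT W := by
    intro p0
    -- interpolation polynomial
    have hsep : ∀ q ∈ T.erase p0.1, ∃ s : Fin (n + 1), p0.1 s ≠ q s := by
      intro q hq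
      have hne : q ≠ p0.1 := (Finset.mem_erase.1 hq).1
      obtain ⟨s, hs⟩ := Function.ne_iff.1 hne
      exact ⟨s, Ne.symm hs⟩
    choose sep hsep' using hsep
    set f : MvPolynomial (Fin (n + 1)) ℂ :=
      ∏ q ∈ (T.erase p0.1).attach,
        (C (p0.1 (sep q.1 q.2) - q.1 (sep q.1 q.2))⁻¹ *
          (X (sep q.1 q.2) - C (q.1 (sep q.1 q.2)))) with hf
    have hfp0 : eval p0.1 f = 1 := by
      rw [hf, map_prod]
      refine Finset.prod_eq_one fun q _ => ?_
      rw [map_mul, map_sub, MvPolynomial.eval_C, MvPolynomial.eval_C, MvPolynomial.eval_X]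
      exact inv_mul_cancel₀ (sub_ne_zero_of_ne (hsep' q.1 q.2))
    have hfother : ∀ p : {x // x ∈ T}, p ≠ p0 → eval p.1 f = 0 := by
      intro p hp
      have hpmem : p.1 ∈ T.erase p0.1 :=
        Finset.mem_erase.2 ⟨fun hc => hp (Subtype.ext hc), p.2⟩
      rw [hf, map_prod]
      refine Finset.prod_eq_zero (Finset.mem_attach _ ⟨p.1, hpmem⟩) ?_
      rw [map_mul, map_sub, MvPolynomial.eval_C, MvPolynomial.eval_C, MvPolynomial.eval_X]
      simp
    obtain ⟨g, hg1, hg2⟩ := reduce A hm f.totalDegree f le_rfl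
    refine ⟨g, hWmem g hg1, ?_⟩
    funext p
    have hEp : p.1 ∈ EAm A n m := hT p.2
    have : eval p.1 g = eval p.1 f := (hg2 p.1 hEp).symm
    rw [hevT]
    simp only [LinearMap.coe_mk, AddHom.coe_mk]
    rw [this]
    rcases eq_or_ne p0 p with rfl | hne
    · rw [hfp0, if_pos rfl]
    · rw [hfother p (Ne.symm hne), if_neg hne]
  have htop : Submodule.map evT W = ⊤ := by
    rw [eq_top_iff]
    intro v _
    have hv := pi_eq_sum_univ v
    rw [hv]
    exact Submodule.sum_mem _ fun p _ => Submodule.smul_mem _ _ (hsingle p)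
  -- finrank chain
  haveI : Module.Finite ℂ W := by
    rw [hW]
    exact FiniteDimensional.span_of_finite ℂ (Sgen.finite_toSet)
  have h1 : T.card = Module.finrank ℂ ({x // x ∈ T} → ℂ) := by
    rw [Module.finrank_pi, Fintype.card_coe]
  have h2 : Module.finrank ℂ ({x // x ∈ T} → ℂ) = Module.finrank ℂ (Submodule.map evT W) := by
    rw [htop, finrank_top]
  have h3 : Module.finrank ℂ (Submodule.map evT W) ≤ Module.finrank ℂ W :=
    Submodule.finrank_map_le evT W
  have h4 : Module.finrank ℂ W ≤ Sgen.card := finrank_span_finset_le_card Sgen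
  omega

theorem stmt5 (A : ℕ → ℕ → ℂ) (n m : ℕ) (hm : 1 ≤ m) :
    (EAm A n m).Finite ∧ (EAm A n m).ncard ≤ (m + n).choose (n + 1) := by
  classical
  set N := (m + n).choose (n + 1) with hN
  have hfin : (EAm A n m).Finite := by
    by_contra hinf
    have hinf' : (EAm A n m).Infinite := hinf
    obtain ⟨t, hsub, hfint, hcardt⟩ := hinf'.exists_subset_ncard_eq (N + 1)
    have hle := key_card A hm hfint.toFinset
      (by rw [Set.Finite.coe_toFinset]; exact hsub)
    rw [← Set.ncard_eq_toFinset_card t hfint] at hle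
    omega
  refine ⟨hfin, ?_⟩
  have hle := key_card A hm hfin.toFinset (by rw [Set.Finite.coe_toFinset])
  rwa [← Set.ncard_eq_toFinset_card _ hfin] at hle
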